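/- arXiv:2108.02106 — 13 statements merged into one kernel-verified Lean document; each statement's English description precedes it below -/
import Mathlib

section
/- Let X and Y be scalable monoids over a ring R, and define the relation ~⊗ on X × Y by: (x₁, y₁) ~⊗ (x₂, y₂) if and only if (α·x₁, β·y₁) = (β·x₂, α·y₂) for some α, β ∈ R. Then ~⊗ is an equivalence relation on X × Y, and moreover (λ·x, y) ~⊗ (x, λ·y) for all x ∈ X, y ∈ Y and λ ∈ R. -/
/-- A scalable monoid over a (unital, associative) ring `R`: a monoid `X` with a scaling
action `• : R × X → X` such that `1 • x = x`, `(a*b) • x = a • (b • x)`, and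
`a • (x*y) = (a • x) * y = x * (a • y)`. -/
class ScalableMonoid (R X : Type*) [Ring R] [Monoid X] extends SMul R X where
  one_smul : ∀ x : X, (1 : R) • x = x
  mul_smul : ∀ (a b : R) (x : X), (a * b) • x = a • (b • x)
  smul_mul_assoc : ∀ (a : R) (x y : X), a • (x * y) = (a • x) * y
  mul_smul_comm : ∀ (a : R) (x y : X), a • (x * y) = x * (a • y)

private lemma sm_comm {R X : Type*} [Ring R] [Monoid X] [ScalableMonoid R X]
    (a b : R) (x : X) : a • (b • x) = b • (a • x) := by
  have h : ∀ (c : R) (z : X), c • z = z * (c • (1 : X)) := by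
    intro c z
    conv_lhs => rw [← mul_one z, ScalableMonoid.mul_smul_comm]
  rw [h b x, ScalableMonoid.smul_mul_assoc, ← h b (a • x)]

/-- The tensor relation on `X × Y` is an equivalence relation, and
`(λ • x, y) ~⊗ (x, λ • y)`. -/
theorem stmt3 {R X Y : Type*} [Ring R] [Monoid X] [Monoid Y]
    [ScalableMonoid R X] [ScalableMonoid R Y] :
    Equivalence (fun p q : X × Y =>
      ∃ α β : R, (α • p.1, β • p.2) = (β • q.1, α • q.2)) ∧
    ∀ (x : X) (y : Y) (lam : R),
      ∃ α β : R, (α • (lam • x), β • y) = (β • x, α • (lam • y)) := by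
  constructor
  · constructor
    · intro p; exact ⟨1, 1, rfl⟩
    · rintro p q ⟨α, β, h⟩
      exact ⟨β, α, by simpa [Prod.ext_iff, eq_comm] using h⟩
    · rintro p q r ⟨α, β, h1⟩ ⟨γ, δ, h2⟩
      obtain ⟨h1a, h1b⟩ := Prod.mk.injEq .. ▸ h1
      obtain ⟨h2a, h2b⟩ := Prod.mk.injEq .. ▸ h2
      refine ⟨γ * α, β * δ, ?_⟩
      simp only [Prod.mk.injEq, ScalableMonoid.mul_smul]
      constructor
      · rw [h1a, sm_comm, h2a]
      · rw [sm_comm β δ, h1b, sm_comm δ α, h2b, sm_comm α γ]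
  · intro x y lam
    exact ⟨1, lam, by simp [ScalableMonoid.one_smul]⟩
end

section
/- Let X be a scalable monoid over a ring R. For every x ∈ X, the element 0·x is commensurable with x, and 0·x depends only on the orbitoid of x: if x ~ y then 0·x = 0·y. Hence each orbitoid C contains a unique element z (its zero element) satisfying z = 0·x for all x ∈ C. -/
/-- `0 • x` is commensurable with `x`; it depends only on the orbitoid of `x`; hence
each orbitoid contains a unique element `z` with `z = 0 • y` for all `y` in the orbitoid. -/
theorem stmt7 {R X : Type*} [Ring R] [Monoid X] [ScalableMonoid R X] :
    (∀ x : X, ∃ α β : R, α • ((0 : R) • x) = β • x) ∧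
    (∀ x y : X, (∃ α β : R, α • x = β • y) → (0 : R) • x = (0 : R) • y) ∧
    (∀ x : X, ∃! z : X, (∃ α β : R, α • z = β • x) ∧
      ∀ y : X, (∃ α β : R, α • y = β • x) → z = (0 : R) • y) := by
  have key : ∀ (a : R) (x : X), (0 : R) • (a • x) = (0 : R) • x := by
    intro a x
    rw [← ScalableMonoid.mul_smul, zero_mul]
  have two : ∀ x y : X, (∃ α β : R, α • x = β • y) → (0 : R) • x = (0 : R) • y := by
    rintro x y ⟨α, β, h⟩
    calc (0 : R) • x = (0 : R) • (α • x) := (key α x).symm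
      _ = (0 : R) • (β • y) := by rw [h]
      _ = (0 : R) • y := key β y
  refine ⟨fun x => ⟨1, 0, ?_⟩, two, fun x => ⟨(0 : R) • x, ⟨⟨1, 0, ?_⟩, fun y hy => (two x y ?_).symm ▸ rfl⟩, ?_⟩⟩
  · rw [ScalableMonoid.one_smul]
  · rw [ScalableMonoid.one_smul]
  · obtain ⟨α, β, h⟩ := hy
    exact ⟨β, α, h.symm⟩
  · rintro z ⟨hz1, hz2⟩
    have := hz2 x ⟨1, 1, rfl⟩
    rw [this]
end

section
/- Let X be a scalable monoid over a ring R, and let u and u' both be unit elements for the same orbitoid C. If ρ·u = ρ'·u' and σ·u = σ'·u' for ρ, σ, ρ', σ' ∈ R, then (ρ+σ)·u = (ρ'+σ')·u'. (Hence the sum of two commensurable elements defined via a unit element is independent of the choice of unit element.) -/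
/-- If `u` and `u'` are both unit elements for the same orbitoid, `ρ • u = ρ' • u'` and
`σ • u = σ' • u'`, then `(ρ + σ) • u = (ρ' + σ') • u'`. -/
theorem stmt8 {R X : Type*} [Ring R] [Monoid X] [ScalableMonoid R X]
    (u u' : X)
    (hu_gen : ∀ x : X, (∃ α β : R, α • x = β • u) → ∃ lam : R, x = lam • u)
    (hu_inj : ∀ lam lam' : R, lam • u = lam' • u → lam = lam')
    (hu'_gen : ∀ x : X, (∃ α β : R, α • x = β • u') → ∃ lam : R, x = lam • u')
    (hu'_inj : ∀ lam lam' : R, lam • u' = lam' • u' → lam = lam')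
    (huu' : ∃ α β : R, α • u = β • u')
    (ρ σ ρ' σ' : R) (hρ : ρ • u = ρ' • u') (hσ : σ • u = σ' • u') :
    (ρ + σ) • u = (ρ' + σ') • u' := by
  obtain ⟨a, b, hab⟩ := huu'
  obtain ⟨μ, hμ⟩ := hu_gen u' ⟨b, a, hab.symm⟩
  have key : ∀ (c c' : R), c • u = c' • u' → c = c' * μ := by
    intro c c' h
    apply hu_inj
    rw [h, hμ, ScalableMonoid.mul_smul]
  have h1 := key ρ ρ' hρ
  have h2 := key σ σ' hσ
  rw [h1, h2, ← add_mul, ScalableMonoid.mul_smul, ← hμ]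
end

section
/- Let X be a scalable monoid over a ring R, and let C be an orbitoid possessing a unit element u. Then R is commutative (αβ = βα for all α, β ∈ R); and if C is non-trivial, i.e., C contains an element x with 0·x ≠ x, then R is non-trivial (0 ≠ 1 in R). -/
/-- If some orbitoid of a scalable monoid has a unit element `u`, then `R` is commutative;
and if that orbitoid is non-trivial (contains `x` with `0 • x ≠ x`), then `R` is non-trivial. -/
theorem stmt9 {R X : Type*} [Ring R] [Monoid X] [ScalableMonoid R X]
    (u : X)
    (hu_gen : ∀ x : X, (∃ α β : R, α • x = β • u) → ∃ lam : R, x = lam • u)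
    (hu_inj : ∀ lam lam' : R, lam • u = lam' • u → lam = lam') :
    (∀ α β : R, α * β = β * α) ∧
    ((∃ x : X, (∃ α β : R, α • x = β • u) ∧ (0 : R) • x ≠ x) → (0 : R) ≠ (1 : R)) := by
  constructor
  · intro α β
    apply hu_inj
    have h1 : (α * β) • u = (α • u) * (β • (1 : X)) := by
      rw [ScalableMonoid.mul_smul, ← ScalableMonoid.smul_mul_assoc,
        ← ScalableMonoid.mul_smul_comm, mul_one]
    have h2 : (β * α) • u = (α • u) * (β • (1 : X)) := by
      rw [ScalableMonoid.mul_smul, ← ScalableMonoid.mul_smul_comm,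
        ← ScalableMonoid.smul_mul_assoc, mul_one]
    rw [h1, h2]
  · rintro ⟨x, _, hx⟩ h01
    exact hx (by rw [h01, ScalableMonoid.one_smul])
end

section
/- Let Q be a quantity space over a field K with basis {e_1, …, e_n}, and let x ∈ Q have expansion x = μ·(e_1^{k_1}⋯e_n^{k_n}). Then the following are equivalent: (1) x is non-zero (0·x ≠ x); (2) μ ≠ 0; (3) x is invertible in Q. -/
/-- A finite quantity-space basis for a commutative scalable monoid `Q` over a field `K`:
a finite family `e₁, …, eₙ` of invertible elements of `Q` such that every `x ∈ Q` has a
unique expansion `x = μ • (e₁^{k₁} ⋯ eₙ^{kₙ})` with `μ ∈ K` and integers `kᵢ`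
(negative powers taken via inverses, i.e. in the group of units). -/
def IsQBasis (K : Type*) {Q : Type*} [Field K] [CommMonoid Q] [ScalableMonoid K Q]
    {n : ℕ} (e : Fin n → Qˣ) : Prop :=
  ∀ x : Q, ∃! p : K × (Fin n → ℤ),
    x = p.1 • (((∏ i, (e i) ^ (p.2 i)) : Qˣ) : Q)

/-- In a quantity space, for `x = μ • (e₁^{k₁}⋯eₙ^{kₙ})` the following are equivalent:
`x` is non-zero (`0 • x ≠ x`), `μ ≠ 0`, and `x` is invertible. -/
theorem stmt11 {K Q : Type*} [Field K] [CommMonoid Q] [ScalableMonoid K Q]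
    {n : ℕ} (e : Fin n → Qˣ) (he : IsQBasis K e)
    (x : Q) (μ : K) (k : Fin n → ℤ)
    (hx : x = μ • (((∏ i, (e i) ^ (k i)) : Qˣ) : Q)) :
    ((0 : K) • x ≠ x ↔ μ ≠ 0) ∧ (μ ≠ 0 ↔ IsUnit x) := by

  have smul2 : ∀ (a b : K) (z : Q), a • (b • z) = (a*b) • z :=
    fun a b z => (ScalableMonoid.mul_smul a b z).symm
  have smulmul : ∀ (a b : K) (y z : Q), (a • y) * (b • z) = (a*b) • (y*z) := by
    intro a b y z
    rw [← ScalableMonoid.smul_mul_assoc, ← ScalableMonoid.mul_smul_comm, smul2]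
  set E : Qˣ := ∏ i, (e i) ^ (k i) with hE
  have key : (0:K) • x = x ↔ μ = 0 := by
    constructor
    · intro h
      have h0x : x = (0:K) • ((E : Q)) := by
        conv_lhs => rw [← h, hx]
        rw [smul2, zero_mul]
      obtain ⟨p, _, hu⟩ := he x
      have h1 := hu (μ, k) hx
      have h2 := hu (0, k) h0x
      have := h1.trans h2.symm
      exact (Prod.mk.injEq _ _ _ _ ▸ this).1
    · intro h
      rw [hx, h, smul2, mul_zero]
  refine ⟨by rw [not_iff_not.symm, not_not, not_not]; exact key, ?_, ?_⟩
  · intro hμ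
    refine ⟨⟨x, μ⁻¹ • ((E⁻¹ : Qˣ) : Q), ?_, ?_⟩, rfl⟩
    · rw [hx, smulmul, mul_inv_cancel₀ hμ, ← Units.val_mul, mul_inv_cancel,
        Units.val_one, ScalableMonoid.one_smul]
    · rw [hx, smulmul, inv_mul_cancel₀ hμ, ← Units.val_mul, inv_mul_cancel,
        Units.val_one, ScalableMonoid.one_smul]
  · intro hux hμ0
    have h0 : (0:K) • x = x := key.mpr hμ0
    obtain ⟨u, hu⟩ := hux
    have hone : (0:K) • (1:Q) = 1 := by
      calc (0:K) • (1:Q) = (0:K) • ((u : Q) * ((u⁻¹ : Qˣ) : Q)) := by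
            rw [← Units.val_mul, mul_inv_cancel, Units.val_one]
        _ = ((0:K) • (u:Q)) * ((u⁻¹ : Qˣ) : Q) := ScalableMonoid.smul_mul_assoc _ _ _
        _ = (u : Q) * ((u⁻¹ : Qˣ) : Q) := by rw [hu, h0]
        _ = 1 := by rw [← Units.val_mul, mul_inv_cancel, Units.val_one]
    have hexp : (1:Q) = (1:K) • (((∏ i, (e i) ^ ((fun _ => (0:ℤ)) i)) : Qˣ) : Q) := by
      simp [ScalableMonoid.one_smul]
    have hexp0 : (1:Q) = (0:K) • (((∏ i, (e i) ^ ((fun _ => (0:ℤ)) i)) : Qˣ) : Q) := by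
      conv_lhs => rw [← hone, hexp]
      rw [smul2, zero_mul]
    obtain ⟨p, _, hu1⟩ := he 1
    have h1 := hu1 ((1:K), fun _ => 0) hexp
    have h2 := hu1 ((0:K), fun _ => 0) hexp0
    have : ((1:K), (fun _ => (0:ℤ))) = ((0:K), (fun _ => (0:ℤ))) := h1.trans h2.symm
    exact one_ne_zero ((Prod.mk.injEq _ _ _ _ ▸ this).1)
end

section
/- Let Q be a quantity space over a field K with basis {e_1, …, e_n}, and let x = μ·(e_1^{k_1}⋯e_n^{k_n}) and y = ν·(e_1^{ℓ_1}⋯e_n^{ℓ_n}). Then the following are equivalent: (1) x ~ y; (2) k_i = ℓ_i for i = 1, …, n; (3) e_1^{k_1}⋯e_n^{k_n} = e_1^{ℓ_1}⋯e_n^{ℓ_n}; (4) ν·x = μ·y. -/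
lemma qbasis_unique {K Q : Type*} [Field K] [CommMonoid Q] [ScalableMonoid K Q]
    {n : ℕ} {e : Fin n → Qˣ} (he : IsQBasis K e) (c d : K) (u v : Fin n → ℤ)
    (h : c • (((∏ i, (e i) ^ (u i)) : Qˣ) : Q) = d • (((∏ i, (e i) ^ (v i)) : Qˣ) : Q)) :
    (c, u) = (d, v) := by
  obtain ⟨p, _, hun⟩ := he (c • (((∏ i, (e i) ^ (u i)) : Qˣ) : Q))
  exact (hun (c, u) rfl).trans (hun (d, v) h).symm

/-- In a quantity space, for `x = μ • (∏ eᵢ^{kᵢ})` and `y = ν • (∏ eᵢ^{ℓᵢ})` the following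
are equivalent: (1) `x ~ y`; (2) `k = ℓ`; (3) `∏ eᵢ^{kᵢ} = ∏ eᵢ^{ℓᵢ}`; (4) `ν • x = μ • y`. -/
theorem stmt12 {K Q : Type*} [Field K] [CommMonoid Q] [ScalableMonoid K Q]
    {n : ℕ} (e : Fin n → Qˣ) (he : IsQBasis K e)
    (x y : Q) (μ ν : K) (k l : Fin n → ℤ)
    (hx : x = μ • (((∏ i, (e i) ^ (k i)) : Qˣ) : Q))
    (hy : y = ν • (((∏ i, (e i) ^ (l i)) : Qˣ) : Q)) :
    ((∃ α β : K, α • x = β • y) ↔ k = l) ∧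
    (k = l ↔ (((∏ i, (e i) ^ (k i)) : Qˣ) : Q) = (((∏ i, (e i) ^ (l i)) : Qˣ) : Q)) ∧
    ((((∏ i, (e i) ^ (k i)) : Qˣ) : Q) = (((∏ i, (e i) ^ (l i)) : Qˣ) : Q) ↔
      ν • x = μ • y) := by
  have msmul := ScalableMonoid.mul_smul (R := K) (X := Q)
  refine ⟨⟨?_, ?_⟩, ⟨?_, ?_⟩, ?_, ?_⟩
  · rintro ⟨α, β, h⟩
    rw [hx, hy, ← msmul, ← msmul] at h
    exact congrArg Prod.snd (qbasis_unique he _ _ _ _ h)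
  · intro h
    exact ⟨ν, μ, by rw [hx, hy, ← msmul, ← msmul, mul_comm, h]⟩
  · intro h; rw [h]
  · intro h
    have := qbasis_unique he 1 1 k l (by rw [h])
    exact congrArg Prod.snd this
  · intro h; rw [hx, hy, ← msmul, ← msmul, mul_comm, h]
  · intro h
    rw [hx, hy, ← msmul, ← msmul] at h
    have := congrArg Prod.snd (qbasis_unique he _ _ _ _ h)
    exact congrArg _ (congrArg _ (funext fun i => congrArg (e i ^ ·) (congrFun this i)))
end

section
/- Let Q be a quantity space over a field K. Every non-zero u ∈ Q is a unit element for its orbitoid [u]: for every x ∈ Q with x ~ u there exists a unique λ ∈ K such that x = λ·u. -/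
/-- In a quantity space, every non-zero `u` is a unit element for its orbitoid: every `x`
commensurable with `u` has a unique expression `x = λ • u`. -/
theorem stmt13 {K Q : Type*} [Field K] [CommMonoid Q] [ScalableMonoid K Q]
    (hQ : ∃ (n : ℕ) (e : Fin n → Qˣ), IsQBasis K e)
    (u : Q) (hu : (0 : K) • u ≠ u) :
    ∀ x : Q, (∃ α β : K, α • x = β • u) → ∃! lam : K, x = lam • u := by
  obtain ⟨n, e, hb⟩ := hQ
  obtain ⟨⟨μ, k⟩, hue, -⟩ := hb u
  have hμ : μ ≠ 0 := by
    rintro rfl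
    apply hu
    rw [hue, ← ScalableMonoid.mul_smul, mul_zero]
  intro x ⟨α, β, hab⟩
  obtain ⟨⟨ν, m⟩, hxe, hxu⟩ := hb x
  obtain ⟨p, -, hpu⟩ := hb (α • x)
  have h1 : ((α * ν, m) : K × (Fin n → ℤ)) = p := by
    apply hpu
    simp only [hxe, ← ScalableMonoid.mul_smul]
  have h2 : ((β * μ, k) : K × (Fin n → ℤ)) = p := by
    apply hpu
    simp only [hab, hue, ← ScalableMonoid.mul_smul]
  have hmk : m = k := congrArg Prod.snd (h1.trans h2.symm)
  refine ⟨ν * μ⁻¹, ?_, ?_⟩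
  · show x = (ν * μ⁻¹) • u
    rw [hue, ← ScalableMonoid.mul_smul, mul_assoc, inv_mul_cancel₀ hμ, mul_one,
      hxe, hmk]
  · intro y hy
    have : ((y * μ, k) : K × (Fin n → ℤ)) = (ν, m) := by
      apply hxu
      simp only [hy, hue, ← ScalableMonoid.mul_smul]
    have hy1 : y * μ = ν := congrArg Prod.fst this
    field_simp [← hy1]
    exact hy1
end

section
/- Let Q be a quantity space over a field K. If x, y ∈ Q are non-zero (0·x ≠ x and 0·y ≠ y), then their product xy is non-zero (0·(xy) ≠ xy). In particular, Q has no zero divisors. -/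
/-- In a quantity space, the product of non-zero quantities is non-zero. -/
theorem stmt14 {K Q : Type*} [Field K] [CommMonoid Q] [ScalableMonoid K Q]
    (hQ : ∃ (n : ℕ) (e : Fin n → Qˣ), IsQBasis K e)
    (x y : Q) (hx : (0 : K) • x ≠ x) (hy : (0 : K) • y ≠ y) :
    (0 : K) • (x * y) ≠ x * y := by
  obtain ⟨n, e, hb⟩ := hQ
  obtain ⟨⟨μ, k⟩, hxe, -⟩ := hb x
  obtain ⟨⟨ν, l⟩, hye, -⟩ := hb y
  have hμ : μ ≠ 0 := by
    rintro rfl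
    apply hx
    rw [hxe, ← ScalableMonoid.mul_smul, mul_zero]
  have hν : ν ≠ 0 := by
    rintro rfl
    apply hy
    rw [hye, ← ScalableMonoid.mul_smul, mul_zero]
  intro h0
  -- expansion of x*y with coefficient μ*ν
  have key : x * y = (μ * ν) • (((∏ i, (e i) ^ (k i + l i)) : Qˣ) : Q) := by
    have hprod : (∏ i, (e i) ^ (k i + l i)) = (∏ i, (e i) ^ (k i)) * (∏ i, (e i) ^ (l i)) := by
      rw [← Finset.prod_mul_distrib]
      exact Finset.prod_congr rfl fun i _ => zpow_add (e i) (k i) (l i)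
    rw [hxe, hye, hprod, ScalableMonoid.mul_smul, Units.val_mul,
      ScalableMonoid.mul_smul_comm ν, ScalableMonoid.smul_mul_assoc]
  obtain ⟨p, hp, hup⟩ := hb (x * y)
  have h1 : ((μ * ν, fun i => k i + l i) : K × (Fin n → ℤ)) = p := hup _ key
  have h2 : ((0, fun i => k i + l i) : K × (Fin n → ℤ)) = p := by
    apply hup
    show x * y = (0 : K) • _
    conv_lhs => rw [← h0, key]
    rw [← ScalableMonoid.mul_smul, zero_mul]
  have : μ * ν = (0 : K) := by
    have := h1.trans h2.symm
    exact (Prod.ext_iff.mp this).1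
  exact (mul_ne_zero hμ hν) this
end

section
/- Let Q be a quantity space over a field K with basis E = {e_1, …, e_n}, and let μ_E(x) denote the measure of x relative to E. Then: (1) μ_E(xy) = μ_E(x)·μ_E(y) for all x, y ∈ Q; (2) if μ_E(x) ≠ 0 then x is invertible and μ_E(x⁻¹) = μ_E(x)⁻¹; (3) μ_E(λ·x) = λ·μ_E(x) for all λ ∈ K and x ∈ Q. -/
section Aux
variable {K Q : Type*} [Field K] [CommMonoid Q] [ScalableMonoid K Q]

lemma SM.smul_mul_smul (a b : K) (x y : Q) :
    (a • x) * (b • y) = (a * b) • (x * y) := by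
  rw [ScalableMonoid.mul_smul, ScalableMonoid.mul_smul_comm,
    ScalableMonoid.smul_mul_assoc]

lemma SM.uniq {n : ℕ} {e : Fin n → Qˣ} (he : IsQBasis K e)
    {w : Q} {a b : K} {j k : Fin n → ℤ}
    (ha : w = a • (((∏ i, (e i) ^ (j i)) : Qˣ) : Q))
    (hb : w = b • (((∏ i, (e i) ^ (k i)) : Qˣ) : Q)) : a = b := by
  obtain ⟨p, _, hup⟩ := he w
  have h1 := hup (a, j) ha
  have h2 := hup (b, k) hb
  have := h1.trans h2.symm
  exact congrArg Prod.fst this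

end Aux

/-- Measures relative to a basis `E`: (1) `μ_E(xy) = μ_E(x)μ_E(y)`;
(2) if `μ_E(x) ≠ 0` then `x` is invertible and `μ_E(x⁻¹) = μ_E(x)⁻¹`;
(3) `μ_E(λ • x) = λ μ_E(x)`. -/
theorem stmt15 {K Q : Type*} [Field K] [CommMonoid Q] [ScalableMonoid K Q]
    {n : ℕ} (e : Fin n → Qˣ) (he : IsQBasis K e)
    (x y : Q) (μx μy : K) (kx ky : Fin n → ℤ)
    (hx : x = μx • (((∏ i, (e i) ^ (kx i)) : Qˣ) : Q))
    (hy : y = μy • (((∏ i, (e i) ^ (ky i)) : Qˣ) : Q)) :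
    (∀ (μ : K) (k : Fin n → ℤ),
      x * y = μ • (((∏ i, (e i) ^ (k i)) : Qˣ) : Q) → μ = μx * μy) ∧
    (μx ≠ 0 → ∃ z : Q, x * z = 1 ∧ z * x = 1 ∧
      ∀ (μ : K) (k : Fin n → ℤ),
        z = μ • (((∏ i, (e i) ^ (k i)) : Qˣ) : Q) → μ = μx⁻¹) ∧
    (∀ (lam μ : K) (k : Fin n → ℤ),
      lam • x = μ • (((∏ i, (e i) ^ (k i)) : Qˣ) : Q) → μ = lam * μx) := by
  have hxy : x * y = (μx * μy) • (((∏ i, (e i) ^ (kx i + ky i)) : Qˣ) : Q) := by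
    rw [hx, hy, SM.smul_mul_smul]
    congr 1
    push_cast [zpow_add, Finset.prod_mul_distrib]
    ring
  refine ⟨fun μ k h => SM.uniq he h hxy, fun hμx => ?_, fun lam μ k h => ?_⟩
  · refine ⟨μx⁻¹ • (((∏ i, (e i) ^ (-kx i)) : Qˣ) : Q), ?_, ?_, ?_⟩
    · rw [hx, SM.smul_mul_smul, mul_inv_cancel₀ hμx]
      have : (∏ i, (e i) ^ (kx i)) * (∏ i, (e i) ^ (-kx i)) = 1 := by
        rw [← Finset.prod_mul_distrib]
        simp [← zpow_add]
      rw [ScalableMonoid.one_smul, ← Units.val_mul, this, Units.val_one]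
    · rw [mul_comm, hx, SM.smul_mul_smul, mul_inv_cancel₀ hμx]
      have : (∏ i, (e i) ^ (kx i)) * (∏ i, (e i) ^ (-kx i)) = 1 := by
        rw [← Finset.prod_mul_distrib]
        simp [← zpow_add]
      rw [ScalableMonoid.one_smul, ← Units.val_mul, this, Units.val_one]
    · intro μ k h
      exact SM.uniq he h rfl
  · have : lam • x = (lam * μx) • (((∏ i, (e i) ^ (kx i)) : Qˣ) : Q) := by
      rw [hx, ScalableMonoid.mul_smul]
    exact SM.uniq he h this
end

section
/- Let Q be a quantity space over a field K. For every x ∈ Q with x ~ 1_Q, the measure of x is independent of the choice of basis: if E and E' are any two bases for Q then μ_E(x) = μ_{E'}(x); indeed x = λ·1_Q for a unique λ ∈ K and μ_E(x) = λ for every basis E. -/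
/-- Two expansions of the same element relative to a basis coincide. -/
lemma expansion_unique {K Q : Type*} [Field K] [CommMonoid Q] [ScalableMonoid K Q]
    {n : ℕ} {e : Fin n → Qˣ} (he : IsQBasis K e) {x : Q}
    {μ₁ μ₂ : K} {k₁ k₂ : Fin n → ℤ}
    (h₁ : x = μ₁ • (((∏ i, (e i) ^ (k₁ i)) : Qˣ) : Q))
    (h₂ : x = μ₂ • (((∏ i, (e i) ^ (k₂ i)) : Qˣ) : Q)) :
    μ₁ = μ₂ ∧ k₁ = k₂ := by
  obtain ⟨p, hp, hup⟩ := he x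
  have e1 := hup (μ₁, k₁) h₁
  have e2 := hup (μ₂, k₂) h₂
  have : (μ₁, k₁) = ((μ₂, k₂) : K × (Fin n → ℤ)) := e1.trans e2.symm
  exact ⟨congrArg Prod.fst this, congrArg Prod.snd this⟩

/-- For `x ~ 1_Q`, the measure of `x` is basis-independent: `x = λ • 1_Q` for a unique
`λ ∈ K`, and relative to every basis the measure of `x` equals `λ`. -/
theorem stmt16 {K Q : Type*} [Field K] [CommMonoid Q] [ScalableMonoid K Q]
    (hQ : ∃ (n : ℕ) (e : Fin n → Qˣ), IsQBasis K e)
    (x : Q) (hx : ∃ α β : K, α • x = β • (1 : Q)) :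
    ∃ lam : K, x = lam • (1 : Q) ∧ (∀ lam' : K, x = lam' • (1 : Q) → lam' = lam) ∧
      ∀ (m : ℕ) (e : Fin m → Qˣ), IsQBasis K e →
        ∀ (μ : K) (k : Fin m → ℤ),
          x = μ • (((∏ i, (e i) ^ (k i)) : Qˣ) : Q) → μ = lam := by
  obtain ⟨n, e, he⟩ := hQ
  obtain ⟨α, β, hab⟩ := hx
  obtain ⟨⟨μ, k⟩, hμk, -⟩ := he x
  have hone : ((((∏ i, (e i) ^ ((0 : ℤ))) : Qˣ) : Q)) = (1 : Q) := by
    simp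
  -- α • x has two expansions: (α*μ, k) and (β, 0)
  have h1 : α • x = (α * μ) • (((∏ i, (e i) ^ (k i)) : Qˣ) : Q) := by
    rw [hμk, ScalableMonoid.mul_smul]
  have h2 : α • x = β • (((∏ i, (e i) ^ ((fun _ => (0:ℤ)) i)) : Qˣ) : Q) := by
    rw [hab]; simp [hone]
  obtain ⟨-, hk0⟩ := expansion_unique he h1 h2
  have hx1 : x = μ • (1 : Q) := by
    rw [hμk, hk0]; simp [hone]
  refine ⟨μ, hx1, ?_, ?_⟩
  · intro lam' h'
    have h'' : x = lam' • (((∏ i, (e i) ^ ((fun _ => (0:ℤ)) i)) : Qˣ) : Q) := by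
      rw [h']; simp [hone]
    have h3 : x = μ • (((∏ i, (e i) ^ ((fun _ => (0:ℤ)) i)) : Qˣ) : Q) := by
      rw [hx1]; simp [hone]
    exact (expansion_unique he h'' h3).1
  · intro m e' he' μ' k' hexp
    have hone' : ((((∏ i, (e' i) ^ ((0 : ℤ))) : Qˣ) : Q)) = (1 : Q) := by simp
    have h3 : x = μ • (((∏ i, (e' i) ^ ((fun _ => (0:ℤ)) i)) : Qˣ) : Q) := by
      rw [hx1]; simp [hone']
    exact (expansion_unique he' hexp h3).1
end

section
/- Let Q be a quantity space over a field K. For every x ∈ Q there exists y ∈ Q such that xy ~ 1_Q. Consequently the quotient monoid Q/~ of orbitoids, with multiplication [x][y] = [xy] and identity [1_Q], is an abelian group. -/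
/-- The commensurability relation `x ~ y ↔ ∃ α β, α • x = β • y` as a multiplicative
congruence on a commutative scalable monoid over a field. Its quotient is the monoid
of orbitoids `Q/~`, with `[x][y] = [xy]` and identity `[1]`. -/
def commensurabilityCon (K Q : Type*) [Field K] [CommMonoid Q] [ScalableMonoid K Q] :
    Con Q where
  r x y := ∃ α β : K, α • x = β • y
  iseqv := by
    constructor
    · intro x
      exact ⟨1, 1, rfl⟩
    · rintro x y ⟨a, b, h⟩
      exact ⟨b, a, h.symm⟩
    · rintro x y z ⟨a, b, h1⟩ ⟨c, d, h2⟩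
      refine ⟨c * a, b * d, ?_⟩
      calc (c * a) • x = c • (a • x) := ScalableMonoid.mul_smul c a x
        _ = c • (b • y) := by rw [h1]
        _ = (c * b) • y := (ScalableMonoid.mul_smul c b y).symm
        _ = (b * c) • y := by rw [mul_comm]
        _ = b • (c • y) := ScalableMonoid.mul_smul b c y
        _ = b • (d • z) := by rw [h2]
        _ = (b * d) • z := (ScalableMonoid.mul_smul b d z).symm
  mul' := by
    rintro w x y z ⟨a, b, h1⟩ ⟨c, d, h2⟩
    refine ⟨a * c, b * d, ?_⟩
    calc (a * c) • (w * y) = a • (c • (w * y)) := ScalableMonoid.mul_smul a c (w * y)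
      _ = a • (w * (c • y)) := by rw [ScalableMonoid.mul_smul_comm c w y]
      _ = a • (w * (d • z)) := by rw [h2]
      _ = (a • w) * (d • z) := ScalableMonoid.smul_mul_assoc a w (d • z)
      _ = (b • x) * (d • z) := by rw [h1]
      _ = b • (x * (d • z)) := (ScalableMonoid.smul_mul_assoc b x (d • z)).symm
      _ = b • (d • (x * z)) := by rw [ScalableMonoid.mul_smul_comm d x z]
      _ = (b * d) • (x * z) := (ScalableMonoid.mul_smul b d (x * z)).symm

/-- In a quantity space `Q`, every `x` has a `y` with `xy ~ 1_Q`; consequently the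
quotient monoid `Q/~` of orbitoids is an abelian group (it is a commutative monoid,
and every element has a two-sided inverse). -/
theorem stmt17 {K Q : Type*} [Field K] [CommMonoid Q] [ScalableMonoid K Q]
    (hQ : ∃ (n : ℕ) (e : Fin n → Qˣ), IsQBasis K e) :
    (∀ x : Q, ∃ y : Q, ∃ α β : K, α • (x * y) = β • (1 : Q)) ∧
    (∀ q : (commensurabilityCon K Q).Quotient, ∃ r, q * r = 1 ∧ r * q = 1) := by
  obtain ⟨n, e, hb⟩ := hQ
  have key : ∀ x : Q, ∃ y : Q, ∃ α β : K, α • (x * y) = β • (1 : Q) := by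
    intro x
    obtain ⟨⟨μ, k⟩, hx, -⟩ := hb x
    refine ⟨(((∏ i, (e i) ^ (k i))⁻¹ : Qˣ) : Q), 1, μ, ?_⟩
    rw [ScalableMonoid.one_smul, hx, ← ScalableMonoid.smul_mul_assoc,
      ← Units.val_mul, mul_inv_cancel, Units.val_one]
  refine ⟨key, ?_⟩
  intro q
  induction q using Con.induction_on with
  | H x =>
    obtain ⟨y, α, β, h⟩ := key x
    have h1 : ((x * y : Q) : (commensurabilityCon K Q).Quotient) = ((1 : Q) : _) :=
      (Con.eq _).mpr ⟨α, β, h⟩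
    exact ⟨(y : (commensurabilityCon K Q).Quotient), h1, by rwa [mul_comm] at h1⟩
end

section
/- Let Q be a quantity space over a field K with basis {e_1, …, e_n}. Then the orbitoids [e_1], …, [e_n] form a basis of cardinality n for the group Q/~: the map e_i ↦ [e_i] is injective, and for every x ∈ Q there exist unique integers k_1, …, k_n such that x ~ e_1^{k_1}⋯e_n^{k_n} (i.e., [x] = [e_1]^{k_1}⋯[e_n]^{k_n}). -/
/-- The orbitoids `[e₁], …, [eₙ]` of the basis elements form a basis of cardinality `n`
for the group `Q/~`: the map `i ↦ [eᵢ]` is injective, and every `x` satisfies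
`x ~ e₁^{k₁}⋯eₙ^{kₙ}` for unique integers `k₁, …, kₙ`. -/
theorem stmt18 {K Q : Type*} [Field K] [CommMonoid Q] [ScalableMonoid K Q]
    {n : ℕ} (e : Fin n → Qˣ) (he : IsQBasis K e) :
    (∀ i j : Fin n, (∃ α β : K, α • ((e i : Q)) = β • ((e j : Q))) → i = j) ∧
    (∀ x : Q, ∃! k : Fin n → ℤ,
      ∃ α β : K, α • x = β • (((∏ i, (e i) ^ (k i)) : Qˣ) : Q)) := by
  have key : ∀ (α β : K) (k k' : Fin n → ℤ),
      α • (((∏ i, (e i) ^ (k i)) : Qˣ) : Q) = β • (((∏ i, (e i) ^ (k' i)) : Qˣ) : Q) →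
      k = k' := by
    intro α β k k' h
    obtain ⟨p, hp, hup⟩ := he (α • (((∏ i, (e i) ^ (k i)) : Qˣ) : Q))
    have h1 := hup (α, k) rfl
    have h2 := hup (β, k') h
    have : ((α, k) : K × (Fin n → ℤ)) = (β, k') := h1.trans h2.symm
    exact congrArg Prod.snd this
  have hei : ∀ i : Fin n,
      (e i : Q) = (((∏ m, (e m) ^ ((Pi.single i 1 : Fin n → ℤ) m)) : Qˣ) : Q) := by
    intro i
    have : (∏ m, (e m) ^ ((Pi.single i 1 : Fin n → ℤ) m)) = e i := by
      rw [Finset.prod_eq_single i]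
      · simp
      · intro b _ hb; simp [Pi.single_eq_of_ne hb]
      · simp
    rw [this]
  constructor
  · rintro i j ⟨α, β, hab⟩
    rw [hei i, hei j] at hab
    have h := key α β _ _ hab
    by_contra hne
    have := congrFun h i
    simp [Pi.single_eq_of_ne hne] at this
  · intro x
    obtain ⟨⟨μ, k⟩, hp, hup⟩ := he x
    refine ⟨k, ⟨1, μ, ?_⟩, ?_⟩
    · rw [ScalableMonoid.one_smul, hp]
    · rintro k' ⟨α, β, h⟩
      have hx : α • x = (α * μ) • (((∏ i, (e i) ^ (k i)) : Qˣ) : Q) := by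
        rw [ScalableMonoid.mul_smul, ← hp]
      rw [hx] at h
      exact (key _ _ _ _ h).symm
end

section
/- Let Q be a quantity space over a field K. Any two bases for Q have the same cardinality: if {e_1, …, e_n} and {e'_1, …, e'_m} are both quantity-space bases for Q, then n = m. -/
namespace Stmt19Aux

variable {K Q : Type*} [Field K] [CommMonoid Q] [ScalableMonoid K Q]

/-- The monomial `e₁^{k₁} ⋯ eₙ^{kₙ}` as an element of `Q`. -/
noncomputable def Ee {n : ℕ} (e : Fin n → Qˣ) (k : Fin n → ℤ) : Q :=
  ((∏ i, (e i) ^ (k i) : Qˣ) : Q)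

lemma Ee_add {n : ℕ} (e : Fin n → Qˣ) (a b : Fin n → ℤ) :
    Ee e (a + b) = Ee e a * Ee e b := by
  simp only [Ee, ← Units.val_mul, ← Finset.prod_mul_distrib]
  congr 1
  refine Finset.prod_congr rfl fun i _ => ?_
  simp [zpow_add]

/-- The scalar component of the unique expansion of `x`. -/
noncomputable def cc {n : ℕ} {e : Fin n → Qˣ} (he : IsQBasis K e) (x : Q) : K :=
  ((he x).choose).1

/-- The exponent vector of the unique expansion of `x`. -/
noncomputable def dd {n : ℕ} {e : Fin n → Qˣ} (he : IsQBasis K e) (x : Q) :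
    Fin n → ℤ :=
  ((he x).choose).2

lemma spec {n : ℕ} {e : Fin n → Qˣ} (he : IsQBasis K e) (x : Q) :
    x = cc he x • Ee e (dd he x) :=
  (he x).choose_spec.1

lemma dd_unique {n : ℕ} {e : Fin n → Qˣ} (he : IsQBasis K e) {x : Q}
    (μ : K) (k : Fin n → ℤ) (h : x = μ • Ee e k) : dd he x = k := by
  have h2 := (he x).choose_spec.2 (μ, k) h
  have := congrArg Prod.snd h2
  simpa [dd] using this.symm

lemma dd_E {n : ℕ} {e : Fin n → Qˣ} (he : IsQBasis K e) (k : Fin n → ℤ) :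
    dd he (Ee e k) = k :=
  dd_unique he 1 k (ScalableMonoid.one_smul (Ee e k)).symm

lemma dd_smul {n : ℕ} {e : Fin n → Qˣ} (he : IsQBasis K e) (μ : K) (x : Q) :
    dd he (μ • x) = dd he x :=
  dd_unique he (μ * cc he x) (dd he x) (by
    rw [ScalableMonoid.mul_smul, ← spec he x])

lemma dd_mul {n : ℕ} {e : Fin n → Qˣ} (he : IsQBasis K e) (x y : Q) :
    dd he (x * y) = dd he x + dd he y :=
  dd_unique he (cc he x * cc he y) (dd he x + dd he y) (by
    rw [Ee_add]
    calc x * y = (cc he x • Ee e (dd he x)) * (cc he y • Ee e (dd he y)) := by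
          rw [← spec he x, ← spec he y]
      _ = cc he x • (Ee e (dd he x) * (cc he y • Ee e (dd he y))) :=
          (ScalableMonoid.smul_mul_assoc _ _ _).symm
      _ = cc he x • (cc he y • (Ee e (dd he x) * Ee e (dd he y))) := by
          rw [← ScalableMonoid.mul_smul_comm]
      _ = (cc he x * cc he y) • (Ee e (dd he x) * Ee e (dd he y)) :=
          (ScalableMonoid.mul_smul _ _ _).symm)

end Stmt19Aux

/-- Any two bases for a quantity space have the same cardinality. -/
theorem stmt19 {K Q : Type*} [Field K] [CommMonoid Q] [ScalableMonoid K Q]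
    {n m : ℕ} (e : Fin n → Qˣ) (e' : Fin m → Qˣ)
    (he : IsQBasis K e) (he' : IsQBasis K e') : n = m := by
  open Stmt19Aux in
  classical
  -- exponent-translation maps between the two bases
  let ψ : (Fin n → ℤ) → (Fin m → ℤ) := fun k => Stmt19Aux.dd he' (Stmt19Aux.Ee e k)
  let ψ' : (Fin m → ℤ) → (Fin n → ℤ) := fun l => Stmt19Aux.dd he (Stmt19Aux.Ee e' l)
  have key : ∀ {n' m' : ℕ} (f : Fin n' → Qˣ) (f' : Fin m' → Qˣ)
      (hf : IsQBasis K f) (hf' : IsQBasis K f') (k : Fin n' → ℤ),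
      Stmt19Aux.dd hf (Stmt19Aux.Ee f' (Stmt19Aux.dd hf' (Stmt19Aux.Ee f k))) = k := by
    intro n' m' f f' hf hf' k
    have h1 := Stmt19Aux.spec hf' (Stmt19Aux.Ee f k)
    have h2 := congrArg (Stmt19Aux.dd hf) h1
    rw [Stmt19Aux.dd_E hf k, Stmt19Aux.dd_smul hf] at h2
    exact h2.symm
  let eqv : (Fin n → ℤ) ≃+ (Fin m → ℤ) :=
    { toFun := ψ
      invFun := ψ'
      left_inv := fun k => key e e' he he' k
      right_inv := fun l => key e' e he' he l
      map_add' := fun a b => by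
        show Stmt19Aux.dd he' (Stmt19Aux.Ee e (a + b)) = _
        rw [Stmt19Aux.Ee_add, Stmt19Aux.dd_mul] }
  have := LinearEquiv.finrank_eq eqv.toIntLinearEquiv
  rwa [Module.finrank_fin_fun, Module.finrank_fin_fun] at this
end
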